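/- arXiv:1006.1148 — 2 statements merged into one kernel-verified Lean document; each statement's English description precedes it below -/
import Mathlib

section
/- Let f, g, h : [0,T] → ℝ be continuous with f, h positive. Then the property that f(t₂) - f(t₁) ≤ ∫_{t₁}^{t₂} (g(t) f(t) + h(t)) dt for all 0 ≤ t₁ < t₂ ≤ T holds if and only if f(t₂)² - f(t₁)² ≤ 2 ∫_{t₁}^{t₂} (g(t) f(t)² + h(t) f(t)) dt for all 0 ≤ t₁ < t₂ ≤ T. -/
open Set intervalIntegral Filter Topology MeasureTheory

private lemma dini_iff (T : ℝ) (φ ψ : ℝ → ℝ)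
    (hφ : ContinuousOn φ (Icc 0 T)) (hψ : ContinuousOn ψ (Icc 0 T)) :
    (∀ t₁ t₂ : ℝ, 0 ≤ t₁ → t₁ < t₂ → t₂ ≤ T →
        φ t₂ - φ t₁ ≤ ∫ t in t₁..t₂, ψ t)
      ↔
    (∀ x ∈ Ico (0:ℝ) T, ∀ r, ψ x < r → ∃ᶠ z in 𝓝[Ioc x T] x, slope φ x z < r) := by
  constructor
  · intro A x hx r hr
    obtain ⟨hx0, hxT⟩ := hx
    have hne : (𝓝[Ioc x T] x).NeBot := by
      refine mem_closure_iff_nhdsWithin_neBot.1 ?_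
      rw [closure_Ioc hxT.ne]
      exact left_mem_Icc.2 hxT.le
    set r' := (ψ x + r) / 2 with hr'def
    have h1 : ψ x < r' := by simp only [hr'def]; linarith
    have h2 : r' < r := by simp only [hr'def]; linarith
    have hcont : ContinuousWithinAt ψ (Icc 0 T) x := hψ x ⟨hx0, hxT.le⟩
    have hev : ∀ᶠ t in 𝓝[Icc 0 T] x, ψ t < r' :=
      Filter.Tendsto.eventually_lt_const h1 hcont
    rcases Metric.mem_nhdsWithin_iff.1 hev with ⟨δ, hδ, hball⟩
    have hmem : ∀ᶠ z in 𝓝[Ioc x T] x, z ∈ Ioc x T := eventually_mem_nhdsWithin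
    have hball' : ∀ᶠ z in 𝓝[Ioc x T] x, dist z x < δ / 2 := by
      apply eventually_nhdsWithin_of_eventually_nhds
      exact eventually_of_mem (Metric.ball_mem_nhds x (by positivity)) fun z hz => hz
    refine ((hmem.and hball').mono ?_).frequently
    rintro z ⟨⟨hxz, hzT⟩, hzd⟩
    have hzx : z - x < δ / 2 := by
      rw [Real.dist_eq, abs_of_nonneg (by linarith : (0:ℝ) ≤ z - x)] at hzd
      exact hzd
    have hsub : Icc x z ⊆ Metric.ball x δ ∩ Icc 0 T := by
      intro t ht
      refine ⟨?_, hx0.trans ht.1, ht.2.trans hzT⟩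
      rw [Metric.mem_ball, Real.dist_eq, abs_of_nonneg (sub_nonneg.2 ht.1)]
      have := ht.2
      linarith
    have hψle : ∀ t ∈ Icc x z, ψ t ≤ r' := fun t ht => (hball (hsub ht)).le
    have hint : IntervalIntegrable ψ MeasureTheory.volume x z :=
      (hψ.mono fun t ht => (hsub ht).2).intervalIntegrable_of_Icc hxz.le
    have hIle : (∫ t in x..z, ψ t) ≤ r' * (z - x) := by
      have h := intervalIntegral.integral_mono_on hxz.le hint
        (_root_.intervalIntegrable_const (c := r')) hψle
      rw [intervalIntegral.integral_const, smul_eq_mul] at h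
      linarith
    have hA := A x z hx0 hxz hzT
    rw [slope_def_field, div_lt_iff₀ (sub_pos.2 hxz)]
    nlinarith [sub_pos.2 hxz]
  · intro P t₁ t₂ ht₁ h12 ht₂
    have hsub : Icc t₁ t₂ ⊆ Icc 0 T := Icc_subset_Icc ht₁ ht₂
    have key : ∀ ⦃y⦄, y ∈ Icc t₁ t₂ →
        φ y ≤ φ t₁ + ∫ s in t₁..y, ψ s := by
      apply image_le_of_liminf_slope_right_le_deriv_boundary (B' := ψ)
        (hφ.mono hsub)
      · simp
      · -- continuity of the primitive
        apply continuousOn_const.add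
        have hio : IntegrableOn ψ (uIcc t₁ t₂) MeasureTheory.volume := by
          rw [uIcc_of_le h12.le]
          exact (hψ.mono hsub).integrableOn_Icc
        have := intervalIntegral.continuousOn_primitive_interval hio
        rwa [uIcc_of_le h12.le] at this
      · -- right derivative of the primitive
        intro x hxm
        have hx0T : x ∈ Ico 0 T := ⟨ht₁.trans hxm.1, lt_of_lt_of_le hxm.2 ht₂⟩
        have hIccT : Icc 0 T ∈ 𝓝[Ioi x] x := by
          rw [mem_nhdsWithin]
          exact ⟨Iio T, isOpen_Iio, hx0T.2, fun t ht => ⟨hx0T.1.trans ht.2.le, ht.1.le⟩⟩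
        apply HasDerivWithinAt.const_add
        refine intervalIntegral.integral_hasDerivWithinAt_right ?_ ?_ ?_
        · exact (hψ.mono (Icc_subset_Icc ht₁ (hxm.2.le.trans ht₂))).intervalIntegrable_of_Icc
            hxm.1
        · exact ⟨Icc 0 T, hIccT,
            (hψ.aestronglyMeasurable measurableSet_Icc)⟩
        · exact (hψ x ⟨hx0T.1, hx0T.2.le⟩).mono_of_mem_nhdsWithin hIccT
      · -- the Dini bound
        intro x hxm r hr
        exact (P x ⟨ht₁.trans hxm.1, lt_of_lt_of_le hxm.2 ht₂⟩ r hr).filter_mono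
          (nhdsWithin_mono x Ioc_subset_Ioi_self)
    have := key (right_mem_Icc.2 h12.le)
    linarith

/-- For continuous `f, g, h : [0,T] → ℝ` with `f, h` positive, the linear Grönwall-type
integral inequality `f(t₂) - f(t₁) ≤ ∫_{t₁}^{t₂} (g f + h)` for all `0 ≤ t₁ < t₂ ≤ T`
holds iff the quadratic version `f(t₂)² - f(t₁)² ≤ 2∫_{t₁}^{t₂} (g f² + h f)` does. -/
theorem stmt2 (T : ℝ) (f g h : ℝ → ℝ)
    (hf : ContinuousOn f (Icc 0 T)) (hg : ContinuousOn g (Icc 0 T))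
    (hh : ContinuousOn h (Icc 0 T))
    (hfpos : ∀ t ∈ Icc (0 : ℝ) T, 0 < f t)
    (hhpos : ∀ t ∈ Icc (0 : ℝ) T, 0 < h t) :
    (∀ t₁ t₂ : ℝ, 0 ≤ t₁ → t₁ < t₂ → t₂ ≤ T →
        f t₂ - f t₁ ≤ ∫ t in t₁..t₂, (g t * f t + h t))
      ↔
    (∀ t₁ t₂ : ℝ, 0 ≤ t₁ → t₁ < t₂ → t₂ ≤ T →
        f t₂ ^ 2 - f t₁ ^ 2 ≤ 2 * ∫ t in t₁..t₂, (g t * f t ^ 2 + h t * f t)) := by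
  have hψ₁ : ContinuousOn (fun t => g t * f t + h t) (Icc 0 T) := (hg.mul hf).add hh
  have hψ₂ : ContinuousOn (fun t => 2 * (g t * f t ^ 2 + h t * f t)) (Icc 0 T) :=
    continuousOn_const.mul ((hg.mul (hf.pow 2)).add (hh.mul hf))
  have e1 := dini_iff T f (fun t => g t * f t + h t) hf hψ₁
  have e2 := dini_iff T (fun t => f t ^ 2) (fun t => 2 * (g t * f t ^ 2 + h t * f t))
    (hf.pow 2) hψ₂
  have e2' : (∀ t₁ t₂ : ℝ, 0 ≤ t₁ → t₁ < t₂ → t₂ ≤ T →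
        f t₂ ^ 2 - f t₁ ^ 2 ≤ 2 * ∫ t in t₁..t₂, (g t * f t ^ 2 + h t * f t))
      ↔ (∀ t₁ t₂ : ℝ, 0 ≤ t₁ → t₁ < t₂ → t₂ ≤ T →
        (fun t => f t ^ 2) t₂ - (fun t => f t ^ 2) t₁
          ≤ ∫ t in t₁..t₂, 2 * (g t * f t ^ 2 + h t * f t)) := by
    simp only [intervalIntegral.integral_const_mul]
  rw [e1, e2', e2]
  -- slope identity
  have hslope : ∀ x z : ℝ, slope (fun t => f t ^ 2) x z = slope f x z * (f z + f x) := by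
    intro x z
    simp only [slope_def_field, div_mul_eq_mul_div]
    congr 1
    ring
  constructor
  · -- linear Dini ⟹ quadratic Dini
    intro H x hx r hr
    have hFx : 0 < f x := hfpos x (Ico_subset_Icc_self hx)
    set c := g x * f x + h x with hc
    have hr2 : 2 * f x * c < r := by rw [hc]; ring_nf; ring_nf at hr; linarith
    set r₁ := (c + r / (2 * f x)) / 2 with hr₁
    have hcr₁ : c < r₁ := by
      have : c < r / (2 * f x) := by
        rw [lt_div_iff₀ (by positivity)]
        nlinarith
      simp only [hr₁]; linarith
    have hr₁r : 2 * f x * r₁ < r := by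
      have : r₁ < r / (2 * f x) := by
        have : c < r / (2 * f x) := by
          rw [lt_div_iff₀ (by positivity)]
          nlinarith
        simp only [hr₁]; linarith
      calc 2 * f x * r₁ < 2 * f x * (r / (2 * f x)) := by
            apply mul_lt_mul_of_pos_left this (by positivity)
        _ = r := by field_simp
    have hfreq := H x hx r₁ hcr₁
    have htendf : Tendsto f (𝓝[Ioc x T] x) (𝓝 (f x)) :=
      (hf x (Ico_subset_Icc_self hx)).mono_left
        (nhdsWithin_mono x fun z hz => ⟨hx.1.trans hz.1.le, hz.2⟩)
    have htend : Tendsto (fun z => f z + f x) (𝓝[Ioc x T] x) (𝓝 (f x + f x)) :=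
      htendf.add tendsto_const_nhds
    have hev1 : ∀ᶠ z in 𝓝[Ioc x T] x, 0 < f z + f x :=
      htend.eventually_const_lt (by linarith)
    have hev2 : ∀ᶠ z in 𝓝[Ioc x T] x, r₁ * (f z + f x) < r :=
      (htend.const_mul r₁).eventually_lt_const (by nlinarith)
    refine (hfreq.and_eventually (hev1.and hev2)).mono ?_
    rintro z ⟨hs, hM, hrM⟩
    rw [hslope]
    calc slope f x z * (f z + f x) < r₁ * (f z + f x) := by
          exact mul_lt_mul_of_pos_right hs hM
      _ < r := hrM
  · -- quadratic Dini ⟹ linear Dini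
    intro H x hx r hr
    have hFx : 0 < f x := hfpos x (Ico_subset_Icc_self hx)
    set c := g x * f x + h x with hc
    have hcr : c < r := hr
    set r₂ := f x * (c + r) with hr₂
    have hq : 2 * (g x * f x ^ 2 + h x * f x) < r₂ := by
      have : 2 * (g x * f x ^ 2 + h x * f x) = 2 * f x * c := by rw [hc]; ring
      rw [this, hr₂]
      nlinarith
    have hfreq := H x hx r₂ hq
    have htendf : Tendsto f (𝓝[Ioc x T] x) (𝓝 (f x)) :=
      (hf x (Ico_subset_Icc_self hx)).mono_left
        (nhdsWithin_mono x fun z hz => ⟨hx.1.trans hz.1.le, hz.2⟩)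
    have htend : Tendsto (fun z => f z + f x) (𝓝[Ioc x T] x) (𝓝 (f x + f x)) :=
      htendf.add tendsto_const_nhds
    have hev1 : ∀ᶠ z in 𝓝[Ioc x T] x, 0 < f z + f x :=
      htend.eventually_const_lt (by linarith)
    have hev2 : ∀ᶠ z in 𝓝[Ioc x T] x, r₂ < r * (f z + f x) :=
      (htend.const_mul r).eventually_const_lt (by nlinarith)
    refine (hfreq.and_eventually (hev1.and hev2)).mono ?_
    rintro z ⟨hs, hM, hrM⟩
    rw [hslope] at hs
    have : slope f x z * (f z + f x) < r * (f z + f x) := hs.trans hrM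
    exact lt_of_mul_lt_mul_right this hM.le
end

section
/- Let U^Q(t) ∈ L²(Ω) for t ∈ [0,T] satisfy U^Q = L U'' for a fixed skew-adjoint unbounded operator L (with respect to the boundary condition), and suppose U solves ∂_t U + N(t) = −(1/ε) L U with ‖U(t)‖ + ‖N(t)‖ ≤ M uniformly. Then for any C¹ test function U' of the form U' = L U'' with ‖U''(t)‖ ≤ K₁ and ‖∂_t U''‖_{L²_t} ≤ K₂: |∫₀^T ⟨U^Q, U'⟩ dt| ≤ ε(2MK₁ + M·T·K₁ + M√T·K₂). -/
open Set intervalIntegral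

/-- Abstract weak* convergence: if the fast component `U^Q` has the same `L`-image as a
solution `U` of `∂_t U + N = −(1/ε) L U` (`L` skew-adjoint), then testing `U^Q` against
test functions of the form `U' = L U''` gains a factor `ε`:
`|∫₀ᵀ ⟨U^Q, L U''⟩ dt| ≤ ε (2MK₁ + MTK₁ + M√T K₂)`. -/
theorem stmt13 {H : Type*} [NormedAddCommGroup H] [InnerProductSpace ℝ H]
    [CompleteSpace H]
    (L : H →ₗ[ℝ] H) (hskew : ∀ x y : H, (inner ℝ (L x) y : ℝ) = -inner ℝ x (L y))
    (T ε M K₁ K₂ : ℝ) (hT : 0 ≤ T) (hε : 0 < ε) (hM : 0 ≤ M)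
    (U N UQ U'' V : ℝ → H)
    -- `U` solves `∂_t U + N = −(1/ε) L U`
    (hU : ∀ t ∈ Icc 0 T, HasDerivAt U (-(ε⁻¹ • L (U t)) - N t) t)
    (hUbd : ∀ t ∈ Icc 0 T, ‖U t‖ ≤ M) (hNbd : ∀ t ∈ Icc 0 T, ‖N t‖ ≤ M)
    -- `U^Q` has the same `L`-image as `U`
    (hQ : ∀ t ∈ Icc 0 T, L (UQ t) = L (U t))
    -- `U''` is `C¹` with derivative `V`, and the test function is `U' = L U''`
    (hU'' : ∀ t ∈ Icc 0 T, HasDerivAt U'' (V t) t)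
    (hK₁ : ∀ t ∈ Icc 0 T, ‖U'' t‖ ≤ K₁)
    (hK₂ : Real.sqrt (∫ t in (0:ℝ)..T, ‖V t‖ ^ 2) ≤ K₂)
    -- continuity (regularity) assumptions
    (hUc : ContinuousOn U (Icc 0 T)) (hNc : ContinuousOn N (Icc 0 T))
    (hUQc : ContinuousOn UQ (Icc 0 T)) (hVc : ContinuousOn V (Icc 0 T))
    (hLUc : ContinuousOn (fun t => L (U t)) (Icc 0 T))
    (hLU''c : ContinuousOn (fun t => L (U'' t)) (Icc 0 T)) :
    |∫ t in (0:ℝ)..T, (inner ℝ (UQ t) (L (U'' t)) : ℝ)|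
      ≤ ε * (2 * M * K₁ + M * T * K₁ + M * Real.sqrt T * K₂) := by
  have h0T : (0:ℝ) ∈ Icc (0:ℝ) T := ⟨le_refl 0, hT⟩
  have hTT : T ∈ Icc (0:ℝ) T := ⟨hT, le_refl T⟩
  have hK₁0 : 0 ≤ K₁ := le_trans (norm_nonneg _) (hK₁ 0 h0T)
  have hK₂0 : 0 ≤ K₂ := le_trans (Real.sqrt_nonneg _) hK₂
  -- the derivative of U
  set D : ℝ → H := fun t => -(ε⁻¹ • L (U t)) - N t with hD
  have hDc : ContinuousOn D (Icc 0 T) := ((hLUc.const_smul ε⁻¹).neg).sub hNc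
  have hU''c : ContinuousOn U'' (Icc 0 T) :=
    fun t ht => ((hU'' t ht).continuousAt).continuousWithinAt
  -- integrability facts
  have iUV : IntervalIntegrable (fun t => (inner ℝ (U t) (V t) : ℝ)) MeasureTheory.volume 0 T :=
    (hUc.inner hVc).intervalIntegrable_of_Icc hT
  have iDU : IntervalIntegrable (fun t => (inner ℝ (D t) (U'' t) : ℝ)) MeasureTheory.volume 0 T :=
    (hDc.inner hU''c).intervalIntegrable_of_Icc hT
  have iNU : IntervalIntegrable (fun t => (inner ℝ (N t) (U'' t) : ℝ)) MeasureTheory.volume 0 T :=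
    (hNc.inner hU''c).intervalIntegrable_of_Icc hT
  have iV : IntervalIntegrable (fun t => ‖V t‖) MeasureTheory.volume 0 T :=
    (hVc.norm).intervalIntegrable_of_Icc hT
  have iV2 : IntervalIntegrable (fun t => ‖V t‖ ^ 2) MeasureTheory.volume 0 T :=
    ((hVc.norm).pow 2).intervalIntegrable_of_Icc hT
  -- FTC: integration by parts
  have hFTC : (∫ t in (0:ℝ)..T, ((inner ℝ (U t) (V t) : ℝ) + inner ℝ (D t) (U'' t)))
      = (inner ℝ (U T) (U'' T) : ℝ) - inner ℝ (U 0) (U'' 0) := by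
    apply intervalIntegral.integral_eq_sub_of_hasDerivAt
    · intro t ht
      rw [uIcc_of_le hT] at ht
      exact HasDerivAt.inner ℝ (hU t ht) (hU'' t ht)
    · exact iUV.add iDU
  -- pointwise identity
  have hpt : ∀ t ∈ Icc (0:ℝ) T, (inner ℝ (UQ t) (L (U'' t)) : ℝ)
      = ε * ((inner ℝ (D t) (U'' t) : ℝ) + inner ℝ (N t) (U'' t)) := by
    intro t ht
    have h1 : (inner ℝ (UQ t) (L (U'' t)) : ℝ) = -inner ℝ (L (U t)) (U'' t) := by
      have := hskew (UQ t) (U'' t)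
      rw [hQ t ht] at this
      linarith
    have h2 : L (U t) = -(ε • (D t + N t)) := by
      simp only [hD]
      rw [sub_add_cancel, smul_neg, smul_smul, mul_inv_cancel₀ hε.ne', one_smul, neg_neg]
    rw [h1, h2]
    rw [inner_neg_left, neg_neg, real_inner_smul_left, inner_add_left]
  -- integral identity
  have hint : (∫ t in (0:ℝ)..T, (inner ℝ (UQ t) (L (U'' t)) : ℝ))
      = ε * (((inner ℝ (U T) (U'' T) : ℝ) - inner ℝ (U 0) (U'' 0)
          - ∫ t in (0:ℝ)..T, (inner ℝ (U t) (V t) : ℝ))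
          + ∫ t in (0:ℝ)..T, (inner ℝ (N t) (U'' t) : ℝ)) := by
    have e1 : (∫ t in (0:ℝ)..T, (inner ℝ (UQ t) (L (U'' t)) : ℝ))
        = ∫ t in (0:ℝ)..T, ε * ((inner ℝ (D t) (U'' t) : ℝ) + inner ℝ (N t) (U'' t)) := by
      apply intervalIntegral.integral_congr
      intro t ht
      rw [uIcc_of_le hT] at ht
      exact hpt t ht
    rw [e1, intervalIntegral.integral_const_mul]
    congr 1
    rw [intervalIntegral.integral_add iDU iNU]
    congr 1
    have := intervalIntegral.integral_add iUV iDU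
    rw [hFTC] at this
    linarith
  -- bounds on the pieces
  have hb1 : |(inner ℝ (U T) (U'' T) : ℝ)| ≤ M * K₁ :=
    le_trans (abs_real_inner_le_norm _ _)
      (mul_le_mul (hUbd T hTT) (hK₁ T hTT) (norm_nonneg _) hM)
  have hb2 : |(inner ℝ (U 0) (U'' 0) : ℝ)| ≤ M * K₁ :=
    le_trans (abs_real_inner_le_norm _ _)
      (mul_le_mul (hUbd 0 h0T) (hK₁ 0 h0T) (norm_nonneg _) hM)
  have hb4 : |∫ t in (0:ℝ)..T, (inner ℝ (N t) (U'' t) : ℝ)| ≤ M * K₁ * T := by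
    have := intervalIntegral.norm_integral_le_of_norm_le_const
      (C := M * K₁) (f := fun t => (inner ℝ (N t) (U'' t) : ℝ)) (a := 0) (b := T) ?_
    · simpa [abs_of_nonneg hT] using this
    · intro t ht
      have ht' : t ∈ Icc (0:ℝ) T := Ioc_subset_Icc_self (by rwa [uIoc_of_le hT] at ht)
      exact le_trans (abs_real_inner_le_norm _ _)
        (mul_le_mul (hNbd t ht') (hK₁ t ht') (norm_nonneg _) hM)
  -- Cauchy–Schwarz in time for ∫ ‖V‖
  set S : ℝ := ∫ t in (0:ℝ)..T, ‖V t‖ ^ 2 with hSdef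
  have hS0 : 0 ≤ S := intervalIntegral.integral_nonneg hT (fun t _ => sq_nonneg _)
  have hVint : (∫ t in (0:ℝ)..T, ‖V t‖) ≤ Real.sqrt T * Real.sqrt S := by
    have key : ∀ a : ℝ, 0 < a →
        (∫ t in (0:ℝ)..T, ‖V t‖) ≤ S / (2 * a) + a * T / 2 := by
      intro a ha
      have hmono : (∫ t in (0:ℝ)..T, ‖V t‖)
          ≤ ∫ t in (0:ℝ)..T, (‖V t‖ ^ 2 / (2 * a) + a / 2) := by
        apply intervalIntegral.integral_mono_on hT iV
          ((iV2.div_const (2 * a)).add (intervalIntegrable_const))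
        intro t _
        have h := sq_nonneg (‖V t‖ - a)
        rw [div_add_div _ _ (by positivity : (2:ℝ) * a ≠ 0) (two_ne_zero), le_div_iff₀ (by positivity)]
        ring_nf
        nlinarith
      have hcomp : (∫ t in (0:ℝ)..T, (‖V t‖ ^ 2 / (2 * a) + a / 2))
          = S / (2 * a) + a * T / 2 := by
        rw [intervalIntegral.integral_add (iV2.div_const (2 * a)) intervalIntegrable_const,
          intervalIntegral.integral_div, intervalIntegral.integral_const]
        simp [hSdef]
        ring
      linarith [hmono, hcomp.le, hcomp.ge]
    rcases eq_or_lt_of_le hT with hT0 | hT0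
    · simp [← hT0]
    rcases eq_or_lt_of_le hS0 with hS0' | hS0'
    · have hle0 : (∫ t in (0:ℝ)..T, ‖V t‖) ≤ 0 := by
        apply le_of_forall_pos_le_add
        intro δ hδ
        have := key (2 * δ / T) (by positivity)
        rw [← hS0'] at this
        calc (∫ t in (0:ℝ)..T, ‖V t‖) ≤ 0 / (2 * (2 * δ / T)) + (2 * δ / T) * T / 2 := this
          _ = δ := by field_simp; ring
          _ ≤ 0 + δ := by linarith
      exact le_trans hle0 (by positivity)
    · have hsS : 0 < Real.sqrt S := Real.sqrt_pos.mpr hS0'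
      have hsT : 0 < Real.sqrt T := Real.sqrt_pos.mpr hT0
      have hSS : Real.sqrt S * Real.sqrt S = S := Real.mul_self_sqrt hS0
      have hTT' : Real.sqrt T * Real.sqrt T = T := Real.mul_self_sqrt hT
      have := key (Real.sqrt S / Real.sqrt T) (by positivity)
      have heq : S / (2 * (Real.sqrt S / Real.sqrt T)) + (Real.sqrt S / Real.sqrt T) * T / 2
          = Real.sqrt T * Real.sqrt S := by
        field_simp
        nlinarith [hSS, hTT', hsS, hsT]
      linarith
  have hb3 : |∫ t in (0:ℝ)..T, (inner ℝ (U t) (V t) : ℝ)| ≤ M * (Real.sqrt T * Real.sqrt S) := by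
    have h1 := intervalIntegral.norm_integral_le_integral_norm
      (f := fun t => (inner ℝ (U t) (V t) : ℝ)) (μ := MeasureTheory.volume) hT
    simp only [Real.norm_eq_abs] at h1
    have h2 : (∫ t in (0:ℝ)..T, |(inner ℝ (U t) (V t) : ℝ)|)
        ≤ ∫ t in (0:ℝ)..T, M * ‖V t‖ := by
      apply intervalIntegral.integral_mono_on hT
        (((hUc.inner hVc).abs).intervalIntegrable_of_Icc hT) (iV.const_mul M)
      intro t ht
      exact le_trans (abs_real_inner_le_norm _ _)
        (mul_le_mul_of_nonneg_right (hUbd t ht) (norm_nonneg _))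
    have h3 : (∫ t in (0:ℝ)..T, M * ‖V t‖) = M * ∫ t in (0:ℝ)..T, ‖V t‖ :=
      intervalIntegral.integral_const_mul M _
    calc |∫ t in (0:ℝ)..T, (inner ℝ (U t) (V t) : ℝ)| ≤ ∫ t in (0:ℝ)..T, M * ‖V t‖ :=
          le_trans h1 h2
      _ = M * ∫ t in (0:ℝ)..T, ‖V t‖ := h3
      _ ≤ M * (Real.sqrt T * Real.sqrt S) := mul_le_mul_of_nonneg_left hVint hM
  -- assemble
  have hsqS : M * (Real.sqrt T * Real.sqrt S) ≤ M * Real.sqrt T * K₂ := by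
    rw [← mul_assoc]
    exact mul_le_mul_of_nonneg_left hK₂ (by positivity)
  rw [hint, abs_mul, abs_of_pos hε]
  apply mul_le_mul_of_nonneg_left _ hε.le
  calc |(inner ℝ (U T) (U'' T) : ℝ) - inner ℝ (U 0) (U'' 0)
        - (∫ t in (0:ℝ)..T, (inner ℝ (U t) (V t) : ℝ))
        + ∫ t in (0:ℝ)..T, (inner ℝ (N t) (U'' t) : ℝ)|
      ≤ |(inner ℝ (U T) (U'' T) : ℝ)| + |(inner ℝ (U 0) (U'' 0) : ℝ)|
        + |∫ t in (0:ℝ)..T, (inner ℝ (U t) (V t) : ℝ)|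
        + |∫ t in (0:ℝ)..T, (inner ℝ (N t) (U'' t) : ℝ)| := by
        have := abs_sub (((inner ℝ (U T) (U'' T) : ℝ) - inner ℝ (U 0) (U'' 0)))
        calc |(inner ℝ (U T) (U'' T) : ℝ) - inner ℝ (U 0) (U'' 0)
              - (∫ t in (0:ℝ)..T, (inner ℝ (U t) (V t) : ℝ))
              + ∫ t in (0:ℝ)..T, (inner ℝ (N t) (U'' t) : ℝ)|
            ≤ |(inner ℝ (U T) (U'' T) : ℝ) - inner ℝ (U 0) (U'' 0)
              - (∫ t in (0:ℝ)..T, (inner ℝ (U t) (V t) : ℝ))|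
              + |∫ t in (0:ℝ)..T, (inner ℝ (N t) (U'' t) : ℝ)| := abs_add_le _ _
          _ ≤ _ := by
              have h1 : |(inner ℝ (U T) (U'' T) : ℝ) - inner ℝ (U 0) (U'' 0)
                  - (∫ t in (0:ℝ)..T, (inner ℝ (U t) (V t) : ℝ))|
                  ≤ |(inner ℝ (U T) (U'' T) : ℝ) - inner ℝ (U 0) (U'' 0)|
                    + |∫ t in (0:ℝ)..T, (inner ℝ (U t) (V t) : ℝ)| := abs_sub _ _
              have h2 : |(inner ℝ (U T) (U'' T) : ℝ) - inner ℝ (U 0) (U'' 0)|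
                  ≤ |(inner ℝ (U T) (U'' T) : ℝ)| + |(inner ℝ (U 0) (U'' 0) : ℝ)| := abs_sub _ _
              linarith
    _ ≤ M * K₁ + M * K₁ + M * Real.sqrt T * K₂ + M * K₁ * T := by
        linarith [le_trans hb3 hsqS]
    _ = 2 * M * K₁ + M * T * K₁ + M * Real.sqrt T * K₂ := by ring
end
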